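/- Let K be a field and f₁,...,fₙ ∈ K[[x]] be formal power series linearly independent over K. Then there exists an invertible n×n matrix A over K such that the power series g₁,...,gₙ defined by [g₁ ⋯ gₙ] = [f₁ ⋯ fₙ]·A are all nonzero and have pairwise distinct orders (the order of a nonzero power series is the smallest exponent with nonzero coefficient). -/

import Mathlib

open PowerSeries

private lemma li_of_distinct_orders {K : Type*} [Field K] {m : ℕ}
    (g : Fin m → PowerSeries K) (h0 : ∀ i, g i ≠ 0)
    (hinj : Function.Injective fun i => (g i).order) :
    LinearIndependent K g := by
  classical
  rw [Fintype.linearIndependent_iff]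
  intro c hc
  by_contra hne
  push_neg at hne
  obtain ⟨j, hj⟩ := hne
  have hs : (Finset.univ.filter (fun i => c i ≠ 0)).Nonempty :=
    ⟨j, by simp [hj]⟩
  obtain ⟨i₀, hi₀mem, hi₀min⟩ :=
    Finset.exists_min_image _ (fun i => (g i).order) hs
  have hc₀ : c i₀ ≠ 0 := (Finset.mem_filter.mp hi₀mem).2
  have h0' : g i₀ ≠ 0 := h0 i₀
  have hne_top : (g i₀).order ≠ ⊤ := by
    simpa [PowerSeries.order_eq_top] using h0'
  obtain ⟨d, hd⟩ := WithTop.ne_top_iff_exists.mp hne_top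
  have hcoeff := congrArg (PowerSeries.coeff d) hc
  rw [map_sum] at hcoeff
  have hsingle : ∀ i ∈ Finset.univ, i ≠ i₀ →
      PowerSeries.coeff d (c i • g i) = 0 := by
    intro i _ hii
    by_cases hci : c i = 0
    · simp [hci]
    · have himem : i ∈ Finset.univ.filter (fun i => c i ≠ 0) := by simp [hci]
      have hle : (g i₀).order ≤ (g i).order := hi₀min i himem
      have hne' : (g i₀).order ≠ (g i).order := fun h => hii (hinj h).symm
      rw [← hd] at hle hne'
      have hlt : (↑d : ℕ∞) < (g i).order := lt_of_le_of_ne hle hne'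
      rw [map_smul, PowerSeries.coeff_of_lt_order d hlt, smul_zero]
  rw [Finset.sum_eq_single i₀ hsingle (by simp)] at hcoeff
  have hco : PowerSeries.coeff d (g i₀) ≠ 0 :=
    (PowerSeries.order_eq_nat.mp hd.symm).1
  rw [map_smul, smul_eq_mul, map_zero] at hcoeff
  exact hco (by simpa [hc₀] using mul_eq_zero.mp hcoeff)

set_option synthInstance.maxHeartbeats 1000000 in
set_option maxHeartbeats 1000000 in
private lemma exists_distinct_orders {K : Type*} [Field K] :
    ∀ n : ℕ, ∀ V : Submodule K (PowerSeries K), FiniteDimensional K V →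
      Module.finrank K V = n →
      ∃ g : Fin n → PowerSeries K, (∀ i, g i ∈ V) ∧ (∀ i, g i ≠ 0) ∧
        Function.Injective fun i => (g i).order := by
  intro n
  induction n with
  | zero =>
    intro V _ _
    exact ⟨fun i => i.elim0, fun i => i.elim0, fun i => i.elim0, fun a => a.elim0⟩
  | succ n ih =>
    intro V hfd hrk
    have hVbot : V ≠ ⊥ := by
      rintro rfl
      simp [finrank_bot] at hrk
    obtain ⟨v, hvV, hv0⟩ := (Submodule.ne_bot_iff V).mp hVbot
    set D : Set ℕ := {d | ∃ w ∈ V, w ≠ 0 ∧ w.order = (d : ℕ∞)} with hD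
    have hDne : D.Nonempty := by
      have : v.order ≠ ⊤ := by simpa [PowerSeries.order_eq_top] using hv0
      obtain ⟨d, hd⟩ := WithTop.ne_top_iff_exists.mp this
      exact ⟨d, v, hvV, hv0, hd.symm⟩
    set d := sInf D with hdd
    obtain ⟨g₀, hg₀V, hg₀0, hg₀d⟩ : ∃ w ∈ V, w ≠ 0 ∧ w.order = (d : ℕ∞) :=
      Nat.sInf_mem hDne
    have hmin : ∀ w ∈ V, w ≠ 0 → (d : ℕ∞) ≤ w.order := by
      intro w hw hw0
      have : w.order ≠ ⊤ := by simpa [PowerSeries.order_eq_top] using hw0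
      obtain ⟨e, he⟩ := WithTop.ne_top_iff_exists.mp this
      rw [← he]
      have hmem : e ∈ D := ⟨w, hw, hw0, he.symm⟩
      have hde : d ≤ e := Nat.sInf_le hmem
      exact Nat.cast_le.mpr hde
    set φ : V →ₗ[K] K := (PowerSeries.coeff d).comp V.subtype with hφ
    have hφg₀ : φ ⟨g₀, hg₀V⟩ ≠ 0 := (PowerSeries.order_eq_nat.mp hg₀d).1
    have hφ0 : φ ≠ 0 := fun h => hφg₀ (by rw [h]; rfl)
    have hrange : LinearMap.range φ = ⊤ := Module.Dual.range_eq_top_of_ne_zero hφ0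
    have hker : Module.finrank K (LinearMap.ker φ) = n := by
      have := LinearMap.finrank_range_add_finrank_ker φ
      rw [hrange, finrank_top, Module.finrank_self, hrk] at this
      omega
    set V' : Submodule K (PowerSeries K) := (LinearMap.ker φ).map V.subtype with hV'
    have hle : V' ≤ V := by
      rintro _ ⟨x, _, rfl⟩
      exact x.2
    have hfd' : FiniteDimensional K V' := Module.Finite.map (LinearMap.ker φ) V.subtype
    have hrk' : Module.finrank K V' = n :=
      (Submodule.finrank_map_subtype_eq V (LinearMap.ker φ)).trans hker
    obtain ⟨g', hg'V, hg'0, hg'inj⟩ := ih V' hfd' hrk'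
    have hgt : ∀ i, (d : ℕ∞) < (g' i).order := by
      intro i
      have hVm : g' i ∈ V := hle (hg'V i)
      have hker' : PowerSeries.coeff d (g' i) = 0 := by
        obtain ⟨x, hx, hxe⟩ := hg'V i
        rw [← hxe]
        exact hx
      refine lt_of_le_of_ne (hmin _ hVm (hg'0 i)) ?_
      intro h
      exact (PowerSeries.order_eq_nat.mp h.symm).1 hker'
    refine ⟨Fin.cons g₀ g', ?_, ?_, ?_⟩
    · intro i
      refine Fin.cases ?_ ?_ i
      · simpa using hg₀V
      · intro i'; simpa using hle (hg'V i')
    · intro i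
      refine Fin.cases ?_ ?_ i
      · simpa using hg₀0
      · intro i'; simpa using hg'0 i'
    · intro a b hab
      rcases Fin.eq_zero_or_eq_succ a with rfl | ⟨a', rfl⟩ <;>
        rcases Fin.eq_zero_or_eq_succ b with rfl | ⟨b', rfl⟩
      · rfl
      · exfalso
        simp only [Fin.cons_zero, Fin.cons_succ] at hab
        rw [hg₀d] at hab
        exact absurd (hab ▸ hgt b') (lt_irrefl _)
      · exfalso
        simp only [Fin.cons_zero, Fin.cons_succ] at hab
        rw [hg₀d] at hab
        exact absurd (hab ▸ hgt a') (lt_irrefl _)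
      · simp only [Fin.cons_succ] at hab
        exact congrArg Fin.succ (hg'inj hab)

theorem exists_matrix_distinct_orders {K : Type*} [Field K] (n : ℕ)
    (f : Fin n → PowerSeries K) (hf : LinearIndependent K f) :
    ∃ A : Matrix (Fin n) (Fin n) K, IsUnit A.det ∧
      (∀ j, (∑ i, A i j • f i) ≠ 0) ∧
      Function.Injective fun j => (∑ i, A i j • f i).order := by
  classical
  set V := Submodule.span K (Set.range f) with hV
  have hfin : FiniteDimensional K V :=
    FiniteDimensional.span_of_finite K (Set.finite_range f)
  have hrk : Module.finrank K V = n := by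
    rw [hV, finrank_span_eq_card hf, Fintype.card_fin]
  obtain ⟨g, hgV, hg0, hginj⟩ := exists_distinct_orders n V hfin hrk
  let b : Module.Basis (Fin n) K V := Module.Basis.span hf
  set A : Matrix (Fin n) (Fin n) K := fun i j => b.repr ⟨g j, hgV j⟩ i with hA
  have hsum : ∀ j, ∑ i, A i j • f i = g j := by
    intro j
    have h2 : ((∑ i, b.repr ⟨g j, hgV j⟩ i • b i : V) : PowerSeries K) = g j := by
      rw [b.sum_repr]
    rw [← h2]
    push_cast
    refine Finset.sum_congr rfl fun i _ => ?_
    rw [hA]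
    congr 1
    exact (congrArg Subtype.val (Module.Basis.span_apply hf i)).symm
  have hgli : LinearIndependent K g := li_of_distinct_orders g hg0 hginj
  have hdet : A.det ≠ 0 := by
    intro h
    obtain ⟨c, hc0, hcv⟩ := Matrix.exists_mulVec_eq_zero_iff.mpr h
    have hz : ∑ j, c j • g j = 0 := by
      calc ∑ j, c j • g j = ∑ j, ∑ i, (c j * A i j) • f i := by
            simp_rw [← hsum, Finset.smul_sum, smul_smul]
        _ = ∑ i, ∑ j, (A i j * c j) • f i := by
            rw [Finset.sum_comm]
            simp_rw [mul_comm]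
        _ = ∑ i, (A.mulVec c) i • f i := by
            simp_rw [Matrix.mulVec, dotProduct, Finset.sum_smul]
        _ = 0 := by rw [hcv]; simp
    exact hc0 (funext fun j => Fintype.linearIndependent_iff.mp hgli c hz j)
  refine ⟨A, isUnit_iff_ne_zero.mpr hdet, fun j => hsum j ▸ hg0 j, ?_⟩
  have : (fun j => (∑ i, A i j • f i).order) = fun j => (g j).order :=
    funext fun j => by rw [hsum]
  rw [this]
  exact hginj
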